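/- For every m ≥ 1, the map (i,j,t,p) ↦ (i, m−j, m−t, i−p) is a bijection from the set I_{(m,m+1)} onto the set I_{(m,m)}. In particular, |I_{(m,m+1)}| = |I_{(m,m)}|. -/
import Mathlib


/-- The quadruple `ρ(y,z) = (|x0∩y|, |x0∩z|, |y∩z|, |x0∩y∩z|)`, with entries
viewed as integers. -/
def rho {n : ℕ} (x0 y z : Finset (Fin n)) : ℤ × ℤ × ℤ × ℤ :=
  (((x0 ∩ y).card : ℤ), ((x0 ∩ z).card : ℤ), ((y ∩ z).card : ℤ),
    ((x0 ∩ y ∩ z).card : ℤ))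

theorem stmt_5 (m : ℕ) (hm : 1 ≤ m) (x0 : Finset (Fin (2*m+1))) (hx0 : x0.card = m) :
    Set.BijOn
      (fun q : ℤ × ℤ × ℤ × ℤ => (q.1, (m : ℤ) - q.2.1, (m : ℤ) - q.2.2.1, q.1 - q.2.2.2))
      {q : ℤ × ℤ × ℤ × ℤ | ∃ y z : Finset (Fin (2*m+1)),
        y.card = m ∧ z.card = m+1 ∧ rho x0 y z = q}
      {q : ℤ × ℤ × ℤ × ℤ | ∃ y z : Finset (Fin (2*m+1)),
        y.card = m ∧ z.card = m ∧ rho x0 y z = q} ∧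
    {q : ℤ × ℤ × ℤ × ℤ | ∃ y z : Finset (Fin (2*m+1)),
        y.card = m ∧ z.card = m+1 ∧ rho x0 y z = q}.ncard =
    {q : ℤ × ℤ × ℤ × ℤ | ∃ y z : Finset (Fin (2*m+1)),
        y.card = m ∧ z.card = m ∧ rho x0 y z = q}.ncard := by
  set f : ℤ × ℤ × ℤ × ℤ → ℤ × ℤ × ℤ × ℤ :=
    fun q => (q.1, (m : ℤ) - q.2.1, (m : ℤ) - q.2.2.1, q.1 - q.2.2.2) with hf
  have finv : Function.Involutive f := by
    intro q; simp only [hf]; ring_nf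
  have key : ∀ y z : Finset (Fin (2*m+1)), y.card = m →
      f (rho x0 y z) = rho x0 y zᶜ := by
    intro y z hy
    have h1 : x0 ∩ zᶜ = x0 \ z := by ext a; simp [Finset.mem_sdiff]
    have h2 : y ∩ zᶜ = y \ z := by ext a; simp [Finset.mem_sdiff]
    have h3 : x0 ∩ y ∩ zᶜ = (x0 ∩ y) \ z := by ext a; simp [Finset.mem_sdiff]; tauto
    have c1 := Finset.card_sdiff_add_card_inter x0 z
    have c2 := Finset.card_sdiff_add_card_inter y z
    have c3 := Finset.card_sdiff_add_card_inter (x0 ∩ y) z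
    have c4 : (x0 ∩ y ∩ z).card = ((x0 ∩ y) ∩ z).card := rfl
    simp only [hf, rho, h1, h2, h3, Prod.mk.injEq]
    refine ⟨trivial, ?_, ?_, ?_⟩ <;> omega
  have cardcompl : ∀ z : Finset (Fin (2*m+1)), zᶜ.card = 2*m+1 - z.card := by
    intro z
    rw [Finset.card_compl, Fintype.card_fin]
  have hmaps : ∀ (k l : ℕ), k + l = 2*m+1 →
      Set.MapsTo f {q : ℤ × ℤ × ℤ × ℤ | ∃ y z : Finset (Fin (2*m+1)),
        y.card = m ∧ z.card = k ∧ rho x0 y z = q}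
      {q : ℤ × ℤ × ℤ × ℤ | ∃ y z : Finset (Fin (2*m+1)),
        y.card = m ∧ z.card = l ∧ rho x0 y z = q} := by
    rintro k l hkl q ⟨y, z, hy, hz, rfl⟩
    refine ⟨y, zᶜ, hy, ?_, (key y z hy).symm⟩
    rw [cardcompl]; omega
  have hbij : Set.BijOn f
      {q : ℤ × ℤ × ℤ × ℤ | ∃ y z : Finset (Fin (2*m+1)),
        y.card = m ∧ z.card = m+1 ∧ rho x0 y z = q}
      {q : ℤ × ℤ × ℤ × ℤ | ∃ y z : Finset (Fin (2*m+1)),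
        y.card = m ∧ z.card = m ∧ rho x0 y z = q} := by
    refine ⟨hmaps (m+1) m (by omega), finv.injective.injOn, ?_⟩
    intro q hq
    refine ⟨f q, hmaps m (m+1) (by omega) hq, finv q⟩
  refine ⟨hbij, ?_⟩
  calc _ = (f '' _).ncard := (Set.ncard_image_of_injOn hbij.injOn).symm
    _ = _ := by rw [hbij.image_eq]
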